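/- Let X be a colored graph whose color classes form a stable (equitable) partition with all classes of size at most 3, where every vertex class induces an empty graph. Then there are no edges between two color classes of different sizes, and between two color classes of the same size the bipartite graph of edges is either empty, a perfect matching, or the bipartite complement of a perfect matching; after complementing, one may assume it is empty or a perfect matching. -/

import Mathlib

open Finset

lemma pairs_card_eq_sum {V : Type*} [Fintype V] [DecidableEq V]
    (X : SimpleGraph V) [DecidableRel X.Adj] {m : ℕ} (c : V → Fin m) (i j : Fin m) :
    ((univ : Finset (V × V)).filter fun p =>
        c p.1 = i ∧ c p.2 = j ∧ X.Adj p.1 p.2).card =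
    ∑ u ∈ univ.filter (fun v => c v = i),
      (univ.filter fun w => c w = j ∧ X.Adj u w).card := by
  rw [Finset.card_eq_sum_card_fiberwise (f := Prod.fst)
    (t := univ.filter fun v => c v = i)
    (by intro p hp; simp only [mem_coe, mem_filter, mem_univ, true_and] at hp ⊢; exact hp.1)]
  refine Finset.sum_congr rfl fun u hu => ?_
  simp only [mem_filter, mem_univ, true_and] at hu
  refine Finset.card_bij' (fun p _ => p.2) (fun w _ => (u, w)) ?_ ?_ ?_ ?_
  · intro p hp
    simp only [mem_filter, mem_univ, true_and] at hp ⊢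
    obtain ⟨⟨h1, h2, h3⟩, h4⟩ := hp
    subst h4; exact ⟨h2, h3⟩
  · intro w hw
    simp only [mem_filter, mem_univ, true_and] at hw ⊢
    exact ⟨⟨hu, hw.1, hw.2⟩, trivial⟩
  · intro p hp
    simp only [mem_filter, mem_univ, true_and] at hp
    exact (Prod.ext_iff.mpr ⟨hp.2.symm, rfl⟩)
  · intro w _; rfl

lemma pairs_card_swap {V : Type*} [Fintype V] [DecidableEq V]
    (X : SimpleGraph V) [DecidableRel X.Adj] {m : ℕ} (c : V → Fin m) (i j : Fin m) :
    ((univ : Finset (V × V)).filter fun p =>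
        c p.1 = i ∧ c p.2 = j ∧ X.Adj p.1 p.2).card =
    ((univ : Finset (V × V)).filter fun p =>
        c p.1 = j ∧ c p.2 = i ∧ X.Adj p.1 p.2).card := by
  refine Finset.card_bij' (fun p _ => p.swap) (fun p _ => p.swap) ?_ ?_ ?_ ?_
  · intro p hp
    simp only [mem_filter, mem_univ, true_and, Prod.fst_swap, Prod.snd_swap] at hp ⊢
    exact ⟨hp.2.1, hp.1, hp.2.2.symm⟩
  · intro p hp
    simp only [mem_filter, mem_univ, true_and, Prod.fst_swap, Prod.snd_swap] at hp ⊢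
    exact ⟨hp.2.1, hp.1, hp.2.2.symm⟩
  · intro p _; exact Prod.swap_swap p
  · intro p _; exact Prod.swap_swap p

/-- For a stable (equitable) partition with classes of size at most 3, classes
inducing empty graphs, and at most `|C_i|·|C_j|/2` edges between any two classes:
there are no edges between classes of different sizes, and between classes of the
same size the bipartite graph is empty or a perfect matching. -/
theorem stable_three_bounded_structure
    {V : Type*} [Fintype V] [DecidableEq V]
    (X : SimpleGraph V) [DecidableRel X.Adj]
    (m : ℕ) (c : V → Fin m)
    (hsize : ∀ i : Fin m, (univ.filter fun v => c v = i).card ≤ 3)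
    (hintern : ∀ u v : V, c u = c v → ¬ X.Adj u v)
    (hstable : ∀ (j : Fin m) (u v : V), c u = c v →
      (univ.filter fun w => c w = j ∧ X.Adj u w).card =
      (univ.filter fun w => c w = j ∧ X.Adj v w).card)
    (hhalf : ∀ i j : Fin m, i ≠ j →
      2 * ((univ : Finset (V × V)).filter fun p =>
          c p.1 = i ∧ c p.2 = j ∧ X.Adj p.1 p.2).card ≤
        (univ.filter fun v => c v = i).card * (univ.filter fun v => c v = j).card) :
    (∀ i j : Fin m,
      (univ.filter fun v => c v = i).card ≠ (univ.filter fun v => c v = j).card →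
      ∀ u v : V, c u = i → c v = j → ¬ X.Adj u v) ∧
    (∀ i j : Fin m, i ≠ j →
      (univ.filter fun v => c v = i).card = (univ.filter fun v => c v = j).card →
      (∀ u v : V, c u = i → c v = j → ¬ X.Adj u v) ∨
      ((∀ u : V, c u = i → ∃! v : V, c v = j ∧ X.Adj u v) ∧
       (∀ v : V, c v = j → ∃! u : V, c u = i ∧ X.Adj u v))) := by
  classical
  -- key computation
  have key : ∀ (i j : Fin m), i ≠ j → ∀ u v : V, c u = i → c v = j → X.Adj u v →
      (univ.filter fun w => c w = j ∧ X.Adj u w).card = 1 ∧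
      (univ.filter fun w => c w = i ∧ X.Adj v w).card = 1 ∧
      (univ.filter fun w => c w = i).card = (univ.filter fun w => c w = j).card := by
    intro i j hij u v hu hv hadj
    set a := (univ.filter fun w => c w = i).card with ha
    set b := (univ.filter fun w => c w = j).card with hb
    set x := (univ.filter fun w => c w = j ∧ X.Adj u w).card with hx
    set y := (univ.filter fun w => c w = i ∧ X.Adj v w).card with hy
    set E := ((univ : Finset (V × V)).filter fun p =>
        c p.1 = i ∧ c p.2 = j ∧ X.Adj p.1 p.2).card with hE
    have hEax : E = a * x := by
      rw [hE, pairs_card_eq_sum X c i j]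
      rw [Finset.sum_congr rfl (fun u' hu' => by
        simp only [mem_filter, mem_univ, true_and] at hu'
        exact hstable j u' u (hu'.trans hu.symm))]
      rw [Finset.sum_const, smul_eq_mul]
    have hEby : E = b * y := by
      rw [hE, pairs_card_swap X c i j, pairs_card_eq_sum X c j i]
      rw [Finset.sum_congr rfl (fun v' hv' => by
        simp only [mem_filter, mem_univ, true_and] at hv'
        exact hstable i v' v (hv'.trans hv.symm))]
      rw [Finset.sum_const, smul_eq_mul]
    have hx1 : 1 ≤ x := by
      rw [hx]
      refine Finset.card_pos.mpr ⟨v, ?_⟩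
      simp only [mem_filter, mem_univ, true_and]
      exact ⟨hv, hadj⟩
    have hy1 : 1 ≤ y := by
      rw [hy]
      refine Finset.card_pos.mpr ⟨u, ?_⟩
      simp only [mem_filter, mem_univ, true_and]
      exact ⟨hu, hadj.symm⟩
    have ha1 : 1 ≤ a := by
      rw [ha]
      refine Finset.card_pos.mpr ⟨u, ?_⟩
      simp only [mem_filter, mem_univ, true_and]
      exact hu
    have hb1 : 1 ≤ b := by
      rw [hb]
      refine Finset.card_pos.mpr ⟨v, ?_⟩
      simp only [mem_filter, mem_univ, true_and]
      exact hv
    have ha3 : a ≤ 3 := hsize i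
    have hb3 : b ≤ 3 := hsize j
    have hhalf' := hhalf i j hij
    rw [← hE, ← ha, ← hb] at hhalf'
    -- 2 * (a * x) ≤ a * b gives 2x ≤ b
    have h2x : 2 * x ≤ b := by
      have : a * (2 * x) ≤ a * b := by rw [show a * (2*x) = 2 * (a*x) by ring, ← hEax]; exact hhalf'
      exact Nat.le_of_mul_le_mul_left this ha1
    have h2y : 2 * y ≤ a := by
      have : b * (2 * y) ≤ b * a := by
        rw [show b * (2*y) = 2 * (b*y) by ring, ← hEby, Nat.mul_comm b a]; exact hhalf'
      exact Nat.le_of_mul_le_mul_left this hb1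
    have hx1' : x = 1 := by omega
    have hy1' : y = 1 := by omega
    refine ⟨hx1', hy1', ?_⟩
    have : a * x = b * y := by rw [← hEax, ← hEby]
    rw [hx1', hy1'] at this
    simpa using this
  constructor
  · intro i j hne u v hu hv hadj
    have hij : i ≠ j := by
      rintro rfl
      exact hne rfl
    exact hne (key i j hij u v hu hv hadj).2.2
  · intro i j hij heq
    by_cases hE : ∀ u v : V, c u = i → c v = j → ¬ X.Adj u v
    · exact Or.inl hE
    · right
      push_neg at hE
      obtain ⟨u0, v0, hu0, hv0, hadj0⟩ := hE
      obtain ⟨hx0, hy0, -⟩ := key i j hij u0 v0 hu0 hv0 hadj0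
      constructor
      · intro u hu
        have : (univ.filter fun w => c w = j ∧ X.Adj u w).card = 1 := by
          rw [hstable j u u0 (hu.trans hu0.symm)]; exact hx0
        obtain ⟨w, hw⟩ := Finset.card_eq_one.mp this
        refine ⟨w, ?_, ?_⟩
        · have : w ∈ univ.filter fun w => c w = j ∧ X.Adj u w := by
            rw [hw]; exact Finset.mem_singleton_self w
          simpa using this
        · intro w' hw'
          have : w' ∈ univ.filter fun w => c w = j ∧ X.Adj u w := by
            simpa using hw'
          rw [hw] at this
          exact Finset.mem_singleton.mp this
      · intro v hv
        have : (univ.filter fun w => c w = i ∧ X.Adj v w).card = 1 := by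
          rw [hstable i v v0 (hv.trans hv0.symm)]; exact hy0
        obtain ⟨w, hw⟩ := Finset.card_eq_one.mp this
        refine ⟨w, ?_, ?_⟩
        · have hmem : w ∈ univ.filter fun w => c w = i ∧ X.Adj v w := by
            rw [hw]; exact Finset.mem_singleton_self w
          simp only [mem_filter, mem_univ, true_and] at hmem
          exact ⟨hmem.1, hmem.2.symm⟩
        · intro w' hw'
          have : w' ∈ univ.filter fun w => c w = i ∧ X.Adj v w := by
            simp only [mem_filter, mem_univ, true_and]
            exact ⟨hw'.1, hw'.2.symm⟩
          rw [hw] at this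
          exact Finset.mem_singleton.mp this
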